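/- Let a₀ > 0, a₁ > 0, a₂ > 0, and β > γ > 1. Define ψ(z) = −a₀ − a₁ z^β + a₂ z^γ. Then ψ(z) < 0 for all z ∈ [0,+∞) if and only if a₀ · a₁^{γ/(β−γ)} > a₂^{β/(β−γ)} · ((γ/β)^{γ/(β−γ)} − (γ/β)^{β/(β−γ)}). -/

import Mathlib

open Set Filter

/-- Signed power: `⌊x⌉^a = sign(x) * |x|^a`. -/
noncomputable def spow (x a : ℝ) : ℝ := Real.sign x * |x| ^ a

/-- Dilation `Λ_r(l, x) = (l^{r₁} x₁, …, l^{rₙ} xₙ)`. -/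
noncomputable def dil {n : ℕ} (r : Fin n → ℝ) (l : ℝ) (x : Fin n → ℝ) : Fin n → ℝ :=
  fun i => l ^ r i * x i

/-- `x` is a solution of `ẋ = F(x)` on `[s, ∞)`. -/
def IsSolOn {E : Type*} [NormedAddCommGroup E] [NormedSpace ℝ E]
    (F : E → E) (x : ℝ → E) (s : ℝ) : Prop :=
  ∀ t ∈ Set.Ici s, HasDerivWithinAt x (F (x t)) (Set.Ici s) t

/-- The origin is (locally) asymptotically stable for `ẋ = F(x)`. -/
def AsympStable {E : Type*} [NormedAddCommGroup E] [NormedSpace ℝ E] (F : E → E) : Prop :=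
  (∀ ε > 0, ∃ η > 0, ∀ x : ℝ → E, IsSolOn F x 0 → ‖x 0‖ < η → ∀ t ≥ 0, ‖x t‖ < ε) ∧
  (∃ δ > 0, ∀ x : ℝ → E, IsSolOn F x 0 → ‖x 0‖ < δ →
    Filter.Tendsto x Filter.atTop (nhds 0))

/-- The origin is small-time stable for `ẋ = F(x)`. -/
def SmallTimeStable {E : Type*} [NormedAddCommGroup E] [NormedSpace ℝ E] (F : E → E) : Prop :=
  ∀ ε > 0, ∃ η > 0, ∀ x : ℝ → E, IsSolOn F x 0 → ‖x 0‖ < η →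
    x ε = 0 ∧ ∀ t ≥ 0, ‖x t‖ < ε

/-- `ψ(z) = -a₀ - a₁z^β + a₂z^γ < 0` on `[0,∞)` iff
`a₀ a₁^{γ/(β-γ)} > a₂^{β/(β-γ)}((γ/β)^{γ/(β-γ)} - (γ/β)^{β/(β-γ)})`. -/
theorem stmt14 (a₀ a₁ a₂ β γ : ℝ) (h₀ : 0 < a₀) (h₁ : 0 < a₁) (h₂ : 0 < a₂)
    (hβγ : γ < β) (hγ : 1 < γ) :
    (∀ z ∈ Set.Ici (0:ℝ), -a₀ - a₁ * z ^ β + a₂ * z ^ γ < 0) ↔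
      a₂ ^ (β/(β-γ)) * ((γ/β) ^ (γ/(β-γ)) - (γ/β) ^ (β/(β-γ))) < a₀ * a₁ ^ (γ/(β-γ)) := by
  have hγ0 : (0:ℝ) < γ := lt_trans one_pos hγ
  have hβ0 : (0:ℝ) < β := lt_trans hγ0 hβγ
  have hδ : (0:ℝ) < β - γ := sub_pos.mpr hβγ
  set δ := β - γ with hδdef
  have hβδ : β / δ = γ / δ + 1 := by rw [hδdef, div_add_one (sub_pos.mpr hβγ).ne']; congr 1; ring
  have hq : (0:ℝ) < γ / β := by positivity
  have hbr : (γ/β) ^ (γ/δ) - (γ/β) ^ (β/δ) = (γ/β) ^ (γ/δ) * (δ/β) := by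
    rw [hβδ, Real.rpow_add hq, Real.rpow_one]
    have h1 : (1 : ℝ) - γ/β = δ/β := by rw [hδdef]; field_simp
    nlinarith [Real.rpow_pos_of_pos hq (γ/δ)]
  set K : ℝ := a₂ ^ (β/δ) * (γ/β) ^ (γ/δ) * (δ/β) / a₁ ^ (γ/δ) with hK
  have ha1p : (0:ℝ) < a₁ ^ (γ/δ) := Real.rpow_pos_of_pos h₁ _
  have hrhs : (a₂ ^ (β/δ) * ((γ/β) ^ (γ/δ) - (γ/β) ^ (β/δ)) < a₀ * a₁ ^ (γ/δ)) ↔ K < a₀ := by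
    rw [hK, div_lt_iff₀ ha1p, hbr, mul_assoc]
  -- upper bound via weighted AM-GM
  have hub : ∀ z : ℝ, 0 ≤ z → a₂ * z ^ γ - a₁ * z ^ β ≤ K := by
    intro z hz
    set s : ℝ := a₂ ^ (β/δ) * (γ/(β*a₁)) ^ (γ/δ) with hs
    have hs0 : (0:ℝ) < s := by positivity
    have hzb : (0:ℝ) ≤ z ^ β := Real.rpow_nonneg hz β
    have hgm := Real.geom_mean_le_arith_mean2_weighted
      hq.le (by positivity : (0:ℝ) ≤ δ/β) (by positivity : (0:ℝ) ≤ β*a₁/γ * z ^ β) hs0.le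
      (by rw [hδdef]; field_simp; ring : γ/β + δ/β = 1)
    have e1 : (z ^ β) ^ (γ/β) = z ^ γ := by
      rw [← Real.rpow_mul hz]; congr 1; field_simp
    have e2 : s ^ (δ/β) = a₂ * (γ/(β*a₁)) ^ (γ/β) := by
      rw [hs, Real.mul_rpow (by positivity) (by positivity),
        ← Real.rpow_mul h₂.le, ← Real.rpow_mul (by positivity)]
      rw [show (β/δ)*(δ/β) = 1 by field_simp, Real.rpow_one,
        show (γ/δ)*(δ/β) = γ/β by field_simp]
    have e3 : (β*a₁/γ) ^ (γ/β) * (γ/(β*a₁)) ^ (γ/β) = 1 := by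
      rw [← Real.mul_rpow (by positivity) (by positivity),
        show β*a₁/γ * (γ/(β*a₁)) = 1 by field_simp, Real.one_rpow]
    have hL : (β*a₁/γ * z ^ β) ^ (γ/β) * s ^ (δ/β) = a₂ * z ^ γ := by
      rw [Real.mul_rpow (by positivity) hzb, e1, e2]
      linear_combination (z ^ γ * a₂) * e3
    have e4 : δ/β * s = K := by
      rw [hs, hK, show γ/(β*a₁) = (γ/β)/a₁ by ring, Real.div_rpow hq.le h₁.le]
      field_simp
    have e5 : γ/β * (β*a₁/γ * z ^ β) = a₁ * z ^ β := by
      field_simp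
    rw [hL, e4, e5] at hgm
    linarith
  -- the max is attained
  set c : ℝ := γ*a₂/(β*a₁) with hc'
  have hc : (0:ℝ) < c := by positivity
  have hcsplit : c = (γ/β) * (a₂/a₁) := by rw [hc']; ring
  have hzg : (c^(1/δ))^γ = c^(γ/δ) := by
    rw [← Real.rpow_mul hc.le]; congr 1; ring
  have hzb2 : (c^(1/δ))^β = c^(β/δ) := by
    rw [← Real.rpow_mul hc.le]; congr 1; ring
  have ha : a₁ ^ (β/δ) = a₁ ^ (γ/δ) * a₁ := by
    rw [hβδ, Real.rpow_add h₁, Real.rpow_one]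
  have e5 : a₂ * c^(γ/δ) = (γ/β)^(γ/δ) * a₂^(β/δ) / a₁^(γ/δ) := by
    rw [hcsplit, Real.mul_rpow hq.le (by positivity), Real.div_rpow h₂.le h₁.le, hβδ,
      Real.rpow_add h₂, Real.rpow_one]
    ring
  have e6 : a₁ * c^(β/δ) = (γ/β)^(β/δ) * a₂^(β/δ) / a₁^(γ/δ) := by
    rw [hcsplit, Real.mul_rpow hq.le (by positivity), Real.div_rpow h₂.le h₁.le, ha]
    field_simp
  have hatt : a₂ * (c^(1/δ))^γ - a₁ * (c^(1/δ))^β = K := by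
    rw [hzg, hzb2, e5, e6, hK]
    linear_combination (a₂ ^ (β/δ) / a₁ ^ (γ/δ)) * hbr
  constructor
  · intro h
    rw [hrhs]
    have hc1 : c ^ (1/δ) ∈ Set.Ici (0:ℝ) := Set.mem_Ici.mpr (Real.rpow_nonneg hc.le _)
    have := h _ hc1
    linarith
  · intro h z hz
    have hKa : K < a₀ := hrhs.mp h
    have := hub z (Set.mem_Ici.mp hz)
    linarith
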